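/- If a₁, …, a_n are positive integers with a₁ + … + a_n = s, then a₁/(a₁+…+a_n) + a₂/(a₂+…+a_n) + … + a_n/a_n ≤ 1/s + 1/(s−1) + … + 1/1 (the s-th harmonic number H_s). -/

import Mathlib

noncomputable section

lemma ico_harmonic_lb (a T : ℕ) (h : a ≤ T) :
    (a : ℝ) / T ≤ ∑ k ∈ Finset.Ico (T - a) T, 1 / ((k : ℝ) + 1) := by
  rcases Nat.eq_zero_or_pos T with hT | hT
  · simp [hT]
  have hcard : (Finset.Ico (T - a) T).card = a := by
    rw [Nat.card_Ico]; omega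
  have : ∀ k ∈ Finset.Ico (T - a) T, 1 / (T : ℝ) ≤ 1 / ((k : ℝ) + 1) := by
    intro k hk
    rw [Finset.mem_Ico] at hk
    apply one_div_le_one_div_of_le
    · positivity
    · have : k + 1 ≤ T := hk.2
      exact_mod_cast this
  calc (a : ℝ) / T = (Finset.Ico (T - a) T).card • (1 / (T : ℝ)) := by
        rw [hcard]; simp [div_eq_mul_inv]
    _ ≤ ∑ k ∈ Finset.Ico (T - a) T, 1 / ((k : ℝ) + 1) :=
        Finset.card_nsmul_le_sum _ _ _ this

theorem harmonic_greedy_bound (n : ℕ) (a : Fin n → ℕ) (ha : ∀ i, 0 < a i)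
    (s : ℕ) (hs : s = ∑ i, a i) :
    ∑ i, (a i : ℝ) / (∑ j ∈ Finset.univ.filter (fun j => i ≤ j), (a j : ℝ))
      ≤ ∑ k ∈ Finset.range s, 1 / ((k : ℝ) + 1) := by
  subst hs
  induction n with
  | zero => simp
  | succ n ih =>
    set b : Fin n → ℕ := a ∘ Fin.succ with hb
    have hb' : ∀ i, 0 < b i := fun i => ha _
    have hsum : ∑ i, a i = a 0 + ∑ i, b i := Fin.sum_univ_succ a
    set s' : ℕ := ∑ i, b i with hs'
    -- rewrite LHS
    rw [Fin.sum_univ_succ]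
    have hden0 : (Finset.univ.filter (fun j : Fin (n+1) => (0 : Fin (n+1)) ≤ j)) =
        Finset.univ := by
      apply Finset.filter_true_of_mem
      intro j _
      exact Fin.zero_le j
    have htail : ∀ i : Fin n,
        (∑ j ∈ Finset.univ.filter (fun j : Fin (n+1) => i.succ ≤ j), (a j : ℝ)) =
        ∑ j ∈ Finset.univ.filter (fun j : Fin n => i ≤ j), (b j : ℝ) := by
      intro i
      rw [Finset.sum_filter, Finset.sum_filter, Fin.sum_univ_succ]
      have h0 : ¬ (i.succ ≤ (0 : Fin (n+1))) := by
        simp [Fin.le_def]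
      rw [if_neg h0, zero_add]
      apply Finset.sum_congr rfl
      intro j _
      simp [Fin.succ_le_succ_iff, hb]
    have hLHS2 : ∑ i : Fin n,
        (a i.succ : ℝ) / (∑ j ∈ Finset.univ.filter (fun j : Fin (n+1) => i.succ ≤ j), (a j : ℝ))
        ≤ ∑ k ∈ Finset.range s', 1 / ((k : ℝ) + 1) := by
      calc ∑ i : Fin n,
          (a i.succ : ℝ) / (∑ j ∈ Finset.univ.filter (fun j : Fin (n+1) => i.succ ≤ j), (a j : ℝ))
          = ∑ i : Fin n, (b i : ℝ) / (∑ j ∈ Finset.univ.filter (fun j : Fin n => i ≤ j), (b j : ℝ)) := by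
            apply Finset.sum_congr rfl
            intro i _
            rw [htail i]
            rfl
        _ ≤ _ := ih b hb'
    have hden0' : (∑ j ∈ Finset.univ.filter (fun j : Fin (n+1) => (0 : Fin (n+1)) ≤ j), (a j : ℝ))
        = ((∑ i, a i : ℕ) : ℝ) := by
      rw [hden0]; push_cast; rfl
    rw [hden0']
    have hsplit : ∑ k ∈ Finset.range (∑ i, a i), 1 / ((k : ℝ) + 1)
        = ∑ k ∈ Finset.range s', 1 / ((k : ℝ) + 1)
          + ∑ k ∈ Finset.Ico s' (∑ i, a i), 1 / ((k : ℝ) + 1) := by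
      rw [Finset.range_eq_Ico, Finset.range_eq_Ico]
      exact (Finset.sum_Ico_consecutive (fun k : ℕ => 1 / ((k : ℝ) + 1)) (Nat.zero_le s') (show s' ≤ ∑ i, a i by omega)).symm
    rw [hsplit]
    have ha0 : (a 0 : ℝ) / ((∑ i, a i : ℕ) : ℝ)
        ≤ ∑ k ∈ Finset.Ico s' (∑ i, a i), 1 / ((k : ℝ) + 1) := by
      have h1 : a 0 ≤ ∑ i, a i := by omega
      have h2 : (∑ i, a i) - a 0 = s' := by omega
      have := ico_harmonic_lb (a 0) (∑ i, a i) h1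
      rwa [h2] at this
    linarith [hLHS2, ha0]
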